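/- Let G be a d-regular graph with chromatic index d+1, and let c : E(G) → {1,...,d+1} be a proper edge coloring. For each vertex v let a_v be the unique color in {1,...,d+1} not appearing on an edge incident to v. If for every path v₁,v₂,v₃ of length 2 in G the difference a_{v₁} − a_{v₃} is either 0 or odd, then c is an additive edge coloring of G. -/

import Mathlib

open scoped Classical
open Finset

namespace AddEdge

variable {V : Type*} [Fintype V] [DecidableEq V]

/-- `N'(e)`-sum: the sum of the colors of the edges of `G` sharing an endpoint
with `e`, excluding `e` itself. -/
noncomputable def nbrSum (G : SimpleGraph V) (c : Sym2 V → ℕ) (e : Sym2 V) : ℕ :=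
  ∑ f ∈ univ.filter (fun f => f ∈ G.edgeSet ∧ f ≠ e ∧ ∃ v, v ∈ e ∧ v ∈ f), c f

/-- `c` is a proper edge coloring of `G`: distinct incident edges get distinct colors. -/
def IsProperEdgeColoring (G : SimpleGraph V) (c : Sym2 V → ℕ) : Prop :=
  ∀ e ∈ G.edgeSet, ∀ f ∈ G.edgeSet, e ≠ f → (∃ v, v ∈ e ∧ v ∈ f) → c e ≠ c f

/-- `c` is an additive edge coloring of `G`: distinct incident edges have distinct
sums of colors over their incident-edge neighborhoods. -/
def IsAdditiveEdgeColoring (G : SimpleGraph V) (c : Sym2 V → ℕ) : Prop :=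
  ∀ e ∈ G.edgeSet, ∀ f ∈ G.edgeSet, e ≠ f → (∃ v, v ∈ e ∧ v ∈ f) →
    nbrSum G c e ≠ nbrSum G c f

/-- The chromatic index: the least `k` such that `G` has a proper edge coloring
with colors from `{1, …, k}`. -/
noncomputable def chromIndex (G : SimpleGraph V) : ℕ :=
  sInf {k | ∃ c : Sym2 V → ℕ, (∀ e ∈ G.edgeSet, c e ∈ Finset.Icc 1 k) ∧
    IsProperEdgeColoring G c}

/-- The proper additive chromatic index `η'_p(G)`: the least `k` such that `G` has an
edge coloring with colors from `{1, …, k}` that is both proper and additive. -/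
noncomputable def properAddIndex (G : SimpleGraph V) : ℕ :=
  sInf {k | ∃ c : Sym2 V → ℕ, (∀ e ∈ G.edgeSet, c e ∈ Finset.Icc 1 k) ∧
    IsProperEdgeColoring G c ∧ IsAdditiveEdgeColoring G c}


section Aux

variable {V : Type*} [Fintype V] [DecidableEq V]

lemma sum_incidence (G : SimpleGraph V) (d : ℕ) (hreg : G.IsRegularOfDegree d)
    (c : Sym2 V → ℕ) (hcol : ∀ e ∈ G.edgeSet, c e ∈ Finset.Icc 1 (d + 1))
    (hc : IsProperEdgeColoring G c)
    (a : V → ℕ) (ha : ∀ v, a v ∈ Finset.Icc 1 (d + 1))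
    (hmiss : ∀ v, ∀ e ∈ G.edgeSet, v ∈ e → c e ≠ a v) (v : V) :
    ∑ f ∈ G.incidenceFinset v, c f + a v = ∑ i ∈ Icc 1 (d + 1), i := by
  have hinj : ∀ x ∈ G.incidenceFinset v, ∀ y ∈ G.incidenceFinset v, c x = c y → x = y := by
    intro x hx y hy hxy
    by_contra hne
    rw [SimpleGraph.mem_incidenceFinset] at hx hy
    exact hc x hx.1 y hy.1 hne ⟨v, hx.2, hy.2⟩ hxy
  have himg : (G.incidenceFinset v).image c = (Icc 1 (d + 1)).erase (a v) := by
    apply Finset.eq_of_subset_of_card_le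
    · intro x hx
      simp only [Finset.mem_image] at hx
      obtain ⟨f, hf, rfl⟩ := hx
      rw [SimpleGraph.mem_incidenceFinset] at hf
      exact Finset.mem_erase.2 ⟨hmiss v f hf.1 hf.2, hcol f hf.1⟩
    · rw [Finset.card_erase_of_mem (ha v), Finset.card_image_of_injOn hinj,
        SimpleGraph.card_incidenceFinset_eq_degree, hreg v, Nat.card_Icc]
      omega
  calc ∑ f ∈ G.incidenceFinset v, c f + a v
      = ∑ x ∈ (G.incidenceFinset v).image c, x + a v := by
        rw [Finset.sum_image hinj]
    _ = ∑ x ∈ (Icc 1 (d + 1)).erase (a v), x + a v := by rw [himg]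
    _ = ∑ i ∈ Icc 1 (d + 1), i := Finset.sum_erase_add _ _ (ha v)

lemma inc_inter (G : SimpleGraph V) {u v : V} (huv : G.Adj u v) :
    G.incidenceFinset u ∩ G.incidenceFinset v = {s(u, v)} := by
  ext f
  simp only [Finset.mem_inter, SimpleGraph.mem_incidenceFinset,
    SimpleGraph.incidenceSet, Set.mem_setOf_eq, Finset.mem_singleton,
    Set.mem_sep_iff]
  constructor
  · rintro ⟨⟨hfe, hu⟩, ⟨_, hv⟩⟩
    exact ((Sym2.mem_and_mem_iff huv.ne).1 ⟨hu, hv⟩)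
  · rintro rfl
    exact ⟨⟨huv, Sym2.mem_mk_left _ _⟩, ⟨huv, Sym2.mem_mk_right _ _⟩⟩

lemma nbrSum_formula (G : SimpleGraph V) (d : ℕ) (hreg : G.IsRegularOfDegree d)
    (c : Sym2 V → ℕ) (hcol : ∀ e ∈ G.edgeSet, c e ∈ Finset.Icc 1 (d + 1))
    (hc : IsProperEdgeColoring G c)
    (a : V → ℕ) (ha : ∀ v, a v ∈ Finset.Icc 1 (d + 1))
    (hmiss : ∀ v, ∀ e ∈ G.edgeSet, v ∈ e → c e ≠ a v)
    {u v : V} (huv : G.Adj u v) :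
    nbrSum G c s(u, v) + c s(u, v) + c s(u, v) + a u + a v
      = 2 * ∑ i ∈ Icc 1 (d + 1), i := by
  have hfilter : (univ.filter (fun f => f ∈ G.edgeSet ∧ f ≠ s(u, v) ∧
      ∃ x, x ∈ s(u, v) ∧ x ∈ f))
      = (G.incidenceFinset u ∪ G.incidenceFinset v).erase s(u, v) := by
    ext f
    simp only [Finset.mem_filter, Finset.mem_univ, true_and, Finset.mem_erase,
      Finset.mem_union, SimpleGraph.mem_incidenceFinset,
      SimpleGraph.incidenceSet, Set.mem_setOf_eq, Set.mem_sep_iff, Sym2.mem_iff]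
    constructor
    · rintro ⟨hfe, hne, x, hx, hxf⟩
      rcases hx with rfl | rfl
      · exact ⟨hne, Or.inl ⟨hfe, hxf⟩⟩
      · exact ⟨hne, Or.inr ⟨hfe, hxf⟩⟩
    · rintro ⟨hne, (⟨hfe, hu⟩ | ⟨hfe, hv⟩)⟩
      · exact ⟨hfe, hne, u, Or.inl rfl, hu⟩
      · exact ⟨hfe, hne, v, Or.inr rfl, hv⟩
  have hmem : s(u, v) ∈ G.incidenceFinset u ∪ G.incidenceFinset v := by
    apply Finset.mem_union_left
    rw [SimpleGraph.mem_incidenceFinset]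
    exact ⟨huv, Sym2.mem_mk_left _ _⟩
  have herase : nbrSum G c s(u, v) + c s(u, v)
      = ∑ f ∈ G.incidenceFinset u ∪ G.incidenceFinset v, c f := by
    rw [nbrSum, hfilter]
    exact Finset.sum_erase_add _ _ hmem
  have hunion : ∑ f ∈ G.incidenceFinset u ∪ G.incidenceFinset v, c f + c s(u, v)
      = ∑ f ∈ G.incidenceFinset u, c f + ∑ f ∈ G.incidenceFinset v, c f := by
    have := Finset.sum_union_inter (s₁ := G.incidenceFinset u)
      (s₂ := G.incidenceFinset v) (f := c)
    rw [inc_inter G huv, Finset.sum_singleton] at this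
    exact this
  have h1 := sum_incidence G d hreg c hcol hc a ha hmiss u
  have h2 := sum_incidence G d hreg c hcol hc a ha hmiss v
  omega

end Aux

/-- Let `G` be `d`-regular with chromatic index `d+1` and let `c` be a
proper edge coloring with colors `{1, …, d+1}`.  If `a v` is the color missing at
each vertex `v`, and for every path `v₁, v₂, v₃` of length 2 the difference
`a v₁ − a v₃` is `0` or odd, then `c` is an additive edge coloring. -/
theorem additive_of_missing_odd (G : SimpleGraph V) (d : ℕ)
    (hreg : G.IsRegularOfDegree d) (hchrom : chromIndex G = d + 1)
    (c : Sym2 V → ℕ) (hcol : ∀ e ∈ G.edgeSet, c e ∈ Finset.Icc 1 (d + 1))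
    (hc : IsProperEdgeColoring G c)
    (a : V → ℕ) (ha : ∀ v, a v ∈ Finset.Icc 1 (d + 1))
    (hmiss : ∀ v, ∀ e ∈ G.edgeSet, v ∈ e → c e ≠ a v)
    (hodd : ∀ v₁ v₂ v₃ : V, G.Adj v₁ v₂ → G.Adj v₂ v₃ → v₁ ≠ v₃ →
      a v₁ = a v₃ ∨ Odd ((a v₁ : ℤ) - (a v₃ : ℤ))) :
    IsAdditiveEdgeColoring G c := by
  intro e he f hf hef ⟨v, hve, hvf⟩ hsum
  obtain ⟨u, rfl⟩ := (Sym2.mem_iff_exists).1 hve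
  obtain ⟨w, rfl⟩ := (Sym2.mem_iff_exists).1 hvf
  rw [SimpleGraph.mem_edgeSet] at he hf
  have huw : u ≠ w := fun h => hef (by rw [h])
  have h1 := nbrSum_formula G d hreg c hcol hc a ha hmiss he
  have h2 := nbrSum_formula G d hreg c hcol hc a ha hmiss hf
  have hne : c s(v, u) ≠ c s(v, w) :=
    hc s(v, u) (G.mem_edgeSet.2 he) s(v, w) (G.mem_edgeSet.2 hf)
      hef ⟨v, Sym2.mem_mk_left _ _, Sym2.mem_mk_left _ _⟩
  rcases hodd u v w he.symm hf huw with heq | hoddd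
  · -- a u = a w forces equal colors
    omega
  · -- a u - a w would be even
    obtain ⟨k, hk⟩ := hoddd
    omega

end AddEdge
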